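/- Fix σ_min ∈ (0,1] and sample points X_1,…,X_n ∈ [−1,1]^d, let σ_t = 1 − (1−σ_min)t, μ_t(y) = t y, let K be the standard d-dimensional Gaussian density K(x) = (2π)^{-d/2} exp(−|x|²/2), and define p_t(x|y) = σ_t^{-d} K((x − μ_t(y))/σ_t), v_t(x|y) = (y − (1−σ_min)x)/σ_t, and v^n_t(x) = ∑_i v_t(x|X_i) p_t(x|X_i)/∑_j p_t(x|X_j). Then for every t ∈ [0,1], the map x ↦ v^n_t(x) is Lipschitz on ℝ^d with Lipschitz constant at most 1/σ_t + 2d/σ_t³. -/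

import Mathlib

open MeasureTheory Finset Real RealInnerProductSpace

noncomputable section

/-- `σ_t = 1 − (1 − σ_min) t`. -/
def sigmaT (σmin t : ℝ) : ℝ := 1 - (1 - σmin) * t

/-- The standard `d`-dimensional Gaussian density `K(x) = (2π)^{-d/2} exp(−|x|²/2)`. -/
def gaussK {d : ℕ} (x : EuclideanSpace ℝ (Fin d)) : ℝ :=
  (2 * Real.pi) ^ (-(d : ℝ) / 2) * Real.exp (-‖x‖ ^ 2 / 2)

/-- The conditional kernel probability path
`p_t(x|y) = σ_t^{-d} K((x − μ_t(y))/σ_t)` with `μ_t(y) = t y`. -/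
def pcond {d : ℕ} (K : EuclideanSpace ℝ (Fin d) → ℝ) (σmin t : ℝ)
    (x y : EuclideanSpace ℝ (Fin d)) : ℝ :=
  ((sigmaT σmin t) ^ d)⁻¹ * K ((sigmaT σmin t)⁻¹ • (x - t • y))

/-- The conditional vector field `v_t(x|y) = (y − (1 − σ_min) x)/σ_t`. -/
def vcond {d : ℕ} (σmin t : ℝ) (x y : EuclideanSpace ℝ (Fin d)) :
    EuclideanSpace ℝ (Fin d) :=
  (sigmaT σmin t)⁻¹ • (y - (1 - σmin) • x)

/-- The empirical vector field `v^n_t(x) = ∑_i v_t(x|X_i) p_t(x|X_i)/∑_j p_t(x|X_j)`. -/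
def vnEmp {d n : ℕ} (K : EuclideanSpace ℝ (Fin d) → ℝ) (σmin : ℝ)
    (X : Fin n → EuclideanSpace ℝ (Fin d)) (t : ℝ) (x : EuclideanSpace ℝ (Fin d)) :
    EuclideanSpace ℝ (Fin d) :=
  (∑ j, pcond K σmin t x (X j))⁻¹ • ∑ i, pcond K σmin t x (X i) • vcond σmin t x (X i)

private lemma var_bound {F : Type*} [NormedAddCommGroup F] [InnerProductSpace ℝ F]
    {n : ℕ} (w : Fin n → ℝ) (hw : ∀ i, 0 ≤ w i) (hw1 : ∑ i, w i = 1)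
    (X : Fin n → F) (R : ℝ) (hR : ∀ i, ‖X i‖ ^ 2 ≤ R) (h : F) :
    ‖∑ i, (w i * ⟪X i, h⟫) • X i - (∑ i, w i * ⟪X i, h⟫) • (∑ j, w j • X j)‖
      ≤ R * ‖h‖ := by

  set m : F := ∑ j, w j • X j with hm
  have key : ∑ i, (w i * ⟪X i, h⟫) • X i - (∑ i, w i * ⟪X i, h⟫) • m
      = ∑ i, (w i * ⟪X i - m, h⟫) • (X i - m) := by
    have expand : ∀ i, (w i * ⟪X i - m, h⟫) • (X i - m)
        = (w i * ⟪X i, h⟫) • X i - (w i * ⟪X i, h⟫) • m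
          - ((w i * ⟪m, h⟫) • X i - (w i * ⟪m, h⟫) • m) := by
      intro i
      rw [inner_sub_left]
      module
    rw [Finset.sum_congr rfl (fun i _ => expand i)]
    rw [Finset.sum_sub_distrib, Finset.sum_sub_distrib, Finset.sum_sub_distrib]
    have e1 : ∑ i, (w i * ⟪X i, h⟫) • m = (∑ i, w i * ⟪X i, h⟫) • m := by
      rw [Finset.sum_smul]
    have e2 : ∑ i, (w i * ⟪m, h⟫) • X i = ⟪m, h⟫ • m := by
      rw [hm, Finset.smul_sum]
      refine Finset.sum_congr rfl fun i _ => ?_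
      rw [smul_smul]
      ring_nf
    have e3 : ∑ i, (w i * ⟪m, h⟫) • m = ⟪m, h⟫ • m := by
      rw [← Finset.sum_smul, ← Finset.sum_mul, hw1, one_mul]
    rw [e1, e2, e3]
    abel
  rw [key]
  have step1 : ‖∑ i, (w i * ⟪X i - m, h⟫) • (X i - m)‖
      ≤ ∑ i, w i * (‖X i - m‖ ^ 2 * ‖h‖) := by
    refine (norm_sum_le _ _).trans (Finset.sum_le_sum fun i _ => ?_)
    rw [norm_smul]
    have : |⟪X i - m, h⟫| ≤ ‖X i - m‖ * ‖h‖ := abs_real_inner_le_norm _ _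
    calc ‖w i * ⟪X i - m, h⟫‖ * ‖X i - m‖
        = w i * |⟪X i - m, h⟫| * ‖X i - m‖ := by
          rw [Real.norm_eq_abs, abs_mul, abs_of_nonneg (hw i)]
      _ ≤ w i * (‖X i - m‖ * ‖h‖) * ‖X i - m‖ := by
          gcongr
          exact hw i
      _ = w i * (‖X i - m‖ ^ 2 * ‖h‖) := by ring
  refine step1.trans ?_
  have var_id : ∑ i, w i * ‖X i - m‖ ^ 2 = (∑ i, w i * ‖X i‖ ^ 2) - ‖m‖ ^ 2 := by
    have : ∀ i, w i * ‖X i - m‖ ^ 2 = w i * ‖X i‖ ^ 2 - 2 * (w i * ⟪X i, m⟫) + w i * ‖m‖ ^ 2 := by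
      intro i
      rw [norm_sub_sq_real]
      ring
    rw [Finset.sum_congr rfl fun i _ => this i, Finset.sum_add_distrib, Finset.sum_sub_distrib,
      ← Finset.mul_sum, ← Finset.sum_mul, hw1, one_mul]
    have : ∑ i, w i * ⟪X i, m⟫ = ‖m‖ ^ 2 := by
      have : ∑ i, w i * ⟪X i, m⟫ = ⟪m, m⟫ := by
        rw [hm, sum_inner]
        exact Finset.sum_congr rfl fun i _ => by rw [real_inner_smul_left]
      rw [this, real_inner_self_eq_norm_sq]
    rw [this]; ring
  calc ∑ i, w i * (‖X i - m‖ ^ 2 * ‖h‖) = (∑ i, w i * ‖X i - m‖ ^ 2) * ‖h‖ := by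
        rw [Finset.sum_mul]; exact Finset.sum_congr rfl fun i _ => by ring
    _ ≤ R * ‖h‖ := by
        apply mul_le_mul_of_nonneg_right _ (norm_nonneg h)
        rw [var_id]
        have : ∑ i, w i * ‖X i‖ ^ 2 ≤ R := by
          calc ∑ i, w i * ‖X i‖ ^ 2 ≤ ∑ i, w i * R :=
                Finset.sum_le_sum fun i _ => mul_le_mul_of_nonneg_left (hR i) (hw i)
            _ = R := by rw [← Finset.sum_mul, hw1, one_mul]
        nlinarith [sq_nonneg ‖m‖]


private lemma smean_lipschitz {F : Type*} [NormedAddCommGroup F] [InnerProductSpace ℝ F]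
    {n : ℕ} (hn : 0 < n) (a : Fin n → ℝ) (ha : ∀ i, 0 < a i)
    (c : ℝ) (hc : 0 ≤ c) (X : Fin n → F) (R : ℝ) (hR : ∀ i, ‖X i‖ ^ 2 ≤ R) :
    LipschitzWith (Real.toNNReal (c * R))
      (fun x => (∑ j, a j * Real.exp (c * ⟪X j, x⟫))⁻¹ •
        ∑ i, (a i * Real.exp (c * ⟪X i, x⟫)) • X i) := by

  have hR0 : 0 ≤ R := le_trans (sq_nonneg _) (hR ⟨0, hn⟩)
  set e : Fin n → F → ℝ := fun i x => a i * Real.exp (c * ⟪X i, x⟫) with he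
  set S : F → ℝ := fun x => ∑ j, e j x with hS
  set N : F → F := fun x => ∑ i, (e i x) • X i with hN
  have hepos : ∀ i x, 0 < e i x := fun i x => mul_pos (ha i) (Real.exp_pos _)
  have hSpos : ∀ x, 0 < S x := fun x =>
    Finset.sum_pos (fun i _ => hepos i x) (Finset.univ_nonempty_iff.2 ⟨⟨0, hn⟩⟩)
  set De : Fin n → F → (F →L[ℝ] ℝ) :=
    fun i x => (a i * (Real.exp (c * ⟪X i, x⟫) * c)) • innerSL ℝ (X i) with hDe
  set f' : F → (F →L[ℝ] F) := fun x =>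
    (S x)⁻¹ • (∑ i, ((De i x).smulRight (X i)))
      + ((-((S x) ^ 2)⁻¹) • ∑ j, De j x).smulRight (N x)
    with hf'
  have hderiv : ∀ x, HasFDerivAt (fun x => (S x)⁻¹ • N x) (f' x) x := by
    intro x
    have hinner : ∀ i, HasFDerivAt (fun y => c * ⟪X i, y⟫) (c • innerSL ℝ (X i)) x :=
      fun i => ((innerSL ℝ (X i)).hasFDerivAt).const_mul c
    have hexp : ∀ i, HasFDerivAt (e i) (De i x) x := by
      intro i
      have := ((hinner i).exp).const_mul (a i)
      simpa [hDe, smul_smul] using this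
    have hSd : HasFDerivAt S (∑ j, De j x) x := HasFDerivAt.fun_sum (fun j _ => hexp j)
    have hSinv : HasFDerivAt (fun y => (S y)⁻¹)
        ((-((S x) ^ 2)⁻¹) • ∑ j, De j x) x :=
      (hasDerivAt_inv (hSpos x).ne').comp_hasFDerivAt x hSd
    have hNd : HasFDerivAt N (∑ i, ((De i x).smulRight (X i))) x :=
      HasFDerivAt.fun_sum (fun i _ => (hexp i).smul_const (X i))
    exact hSinv.smul hNd
  -- pointwise operator norm bound
  have hbound : ∀ x, ‖f' x‖ ≤ c * R := by
    intro x
    refine ContinuousLinearMap.opNorm_le_bound _ (mul_nonneg hc hR0) (fun h => ?_)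
    set w : Fin n → ℝ := fun i => (S x)⁻¹ * e i x with hw
    have hw0 : ∀ i, 0 ≤ w i := fun i => by
      have := (hSpos x).le
      have := (hepos i x).le
      positivity
    have hw1 : ∑ i, w i = 1 := by
      rw [hw]
      simp only []
      rw [← Finset.mul_sum]
      exact inv_mul_cancel₀ (hSpos x).ne'
    have hDeApp : ∀ i, De i x h = c * (e i x * ⟪X i, h⟫) := by
      intro i
      rw [hDe, he]
      simp only [ContinuousLinearMap.smul_apply, innerSL_apply_apply, smul_eq_mul]
      ring
    have h1 : f' x h = (S x)⁻¹ • (∑ i, (c * (e i x * ⟪X i, h⟫)) • X i)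
        + ((-((S x) ^ 2)⁻¹) * (∑ j, c * (e j x * ⟪X j, h⟫))) • N x := by
      rw [hf']
      simp only [ContinuousLinearMap.add_apply, ContinuousLinearMap.smul_apply,
        ContinuousLinearMap.smulRight_apply, ContinuousLinearMap.coe_sum', Finset.sum_apply,
        smul_eq_mul]
      rw [Finset.sum_congr rfl (fun i _ => by rw [hDeApp i] :
        ∀ i ∈ Finset.univ, De i x h • X i = (c * (e i x * ⟪X i, h⟫)) • X i)]
      rw [Finset.sum_congr rfl (fun j _ => hDeApp j)]
    have happ : f' x h = c • (∑ i, (w i * ⟪X i, h⟫) • X i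
        - (∑ i, w i * ⟪X i, h⟫) • (∑ j, w j • X j)) := by
      have hNw : (∑ j, w j • X j) = (S x)⁻¹ • N x := by
        rw [hN, Finset.smul_sum]
        exact Finset.sum_congr rfl fun j _ => by rw [hw, smul_smul]
      have hsum : ∑ i, w i * ⟪X i, h⟫ = (S x)⁻¹ * ∑ i, e i x * ⟪X i, h⟫ := by
        rw [Finset.mul_sum]
        refine Finset.sum_congr rfl fun i _ => ?_
        rw [hw]; ring
      have hsum2 : ∑ j, c * (e j x * ⟪X j, h⟫) = c * ∑ j, e j x * ⟪X j, h⟫ := by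
        rw [Finset.mul_sum]
      have eqA : (S x)⁻¹ • (∑ i, (c * (e i x * ⟪X i, h⟫)) • X i)
          = c • ∑ i, (w i * ⟪X i, h⟫) • X i := by
        rw [Finset.smul_sum, Finset.smul_sum]
        refine Finset.sum_congr rfl fun i _ => ?_
        rw [smul_smul, smul_smul]
        congr 1
        rw [hw]; ring
      have eqB : ((-((S x) ^ 2)⁻¹) * (∑ j, c * (e j x * ⟪X j, h⟫))) • N x
          = -(c • ((∑ i, w i * ⟪X i, h⟫) • (∑ j, w j • X j))) := by
        rw [hNw, smul_smul, smul_smul, ← neg_smul]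
        congr 1
        rw [hsum, hsum2, sq, mul_inv]
        ring
      rw [h1, eqA, eqB, ← sub_eq_add_neg, ← smul_sub]
    rw [happ, norm_smul, Real.norm_eq_abs, abs_of_nonneg hc]
    calc c * ‖∑ i, (w i * ⟪X i, h⟫) • X i
          - (∑ i, w i * ⟪X i, h⟫) • (∑ j, w j • X j)‖ ≤ c * (R * ‖h‖) := by
          exact mul_le_mul_of_nonneg_left (var_bound w hw0 hw1 X R hR h) hc
      _ = c * R * ‖h‖ := by ring
  rw [← lipschitzOnWith_univ]
  apply Convex.lipschitzOnWith_of_nnnorm_hasFDerivWithin_le (f' := f')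
    (fun x _ => (hderiv x).hasFDerivWithinAt) ?_ convex_univ
  intro x _
  rw [← norm_toNNReal]
  exact Real.toNNReal_mono (hbound x)

/-- **Lipschitz bound for the empirical vector field with Gaussian kernel.**
Fix `σ_min ∈ (0,1]` and sample points `X_1,…,X_n ∈ [−1,1]^d`, let `σ_t = 1 − (1−σ_min)t`,
`μ_t(y) = ty`, let `K` be the standard `d`-dimensional Gaussian density, and define
`p_t(x|y)`, `v_t(x|y)` and `v^n_t` as above. Then for every `t ∈ [0,1]`, the map
`x ↦ v^n_t(x)` is Lipschitz on `ℝ^d` with Lipschitz constant at most `1/σ_t + 2d/σ_t³`. -/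
theorem empirical_vector_field_lipschitz_bound (d n : ℕ) (hd : 1 ≤ d) (hn : 1 ≤ n)
    (σmin : ℝ) (hσ : σmin ∈ Set.Ioc (0:ℝ) 1)
    (X : Fin n → EuclideanSpace ℝ (Fin d)) (hX : ∀ i, ∀ k, X i k ∈ Set.Icc (-1:ℝ) 1) :
    ∀ t ∈ Set.Icc (0:ℝ) 1,
      LipschitzWith
        (Real.toNNReal (1 / sigmaT σmin t + 2 * d / (sigmaT σmin t) ^ 3))
        (fun x => vnEmp gaussK σmin X t x) := by
  intro t ht
  classical
  set σ : ℝ := sigmaT σmin t with hσdef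
  obtain ⟨hσ0, hσ1⟩ := hσ
  obtain ⟨ht0, ht1⟩ := ht
  have h1σ : 0 ≤ 1 - σmin := by linarith
  have hσmin : σmin ≤ σ := by
    rw [hσdef, sigmaT]
    nlinarith
  have hσle1 : σ ≤ 1 := by
    rw [hσdef, sigmaT]
    nlinarith
  have hσpos : 0 < σ := lt_of_lt_of_le hσ0 hσmin
  have hn0 : 0 < n := hn
  -- the squared norms of the sample points are bounded by d
  have hXd : ∀ i, ‖X i‖ ^ 2 ≤ (d : ℝ) := by
    intro i
    have : ‖X i‖ ^ 2 = ∑ k, ‖X i k‖ ^ 2 := by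
      rw [EuclideanSpace.norm_eq, Real.sq_sqrt]
      positivity
    rw [this]
    calc ∑ k, ‖X i k‖ ^ 2 ≤ ∑ _k : Fin d, (1:ℝ) := by
          refine Finset.sum_le_sum fun k _ => ?_
          have h1 := (hX i k).1
          have h2 := (hX i k).2
          rw [Real.norm_eq_abs, sq_abs]
          nlinarith
      _ = (d : ℝ) := by simp
  set c : ℝ := t / σ ^ 2 with hcdef
  have hc0 : 0 ≤ c := by positivity
  set a : Fin n → ℝ := fun i => Real.exp (-(t ^ 2 * ‖X i‖ ^ 2) / (2 * σ ^ 2)) with hadef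
  have ha : ∀ i, 0 < a i := fun i => Real.exp_pos _
  set q : Fin n → EuclideanSpace ℝ (Fin d) → ℝ :=
    fun i x => a i * Real.exp (c * ⟪X i, x⟫) with hqdef
  have hqpos : ∀ i x, 0 < q i x := fun i x => mul_pos (ha i) (Real.exp_pos _)
  set C : EuclideanSpace ℝ (Fin d) → ℝ :=
    fun x => (σ ^ d)⁻¹ * ((2 * Real.pi) ^ (-(d : ℝ) / 2) * Real.exp (-‖x‖ ^ 2 / (2 * σ ^ 2)))
    with hCdef
  have hCpos : ∀ x, 0 < C x := by
    intro x
    have h2π : (0:ℝ) < 2 * Real.pi := by positivity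
    have := Real.rpow_pos_of_pos h2π (-(d : ℝ) / 2)
    have := Real.exp_pos (-‖x‖ ^ 2 / (2 * σ ^ 2))
    positivity
  -- factor the Gaussian kernel
  have hsplit : ∀ x i, pcond gaussK σmin t x (X i) = C x * q i x := by
    intro x i
    rw [pcond, gaussK, hCdef, hqdef, hadef]
    simp only [← hσdef]
    have hnorm : ‖σ⁻¹ • (x - t • X i)‖ ^ 2 = (σ ^ 2)⁻¹ * ‖x - t • X i‖ ^ 2 := by
      rw [norm_smul, mul_pow, Real.norm_eq_abs, sq_abs, inv_pow]
    have hns : ‖x - t • X i‖ ^ 2 = ‖x‖ ^ 2 - 2 * (t * ⟪X i, x⟫) + t ^ 2 * ‖X i‖ ^ 2 := by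
      rw [norm_sub_sq_real, real_inner_smul_right, norm_smul, real_inner_comm]
      rw [Real.norm_eq_abs, mul_pow, sq_abs]
    have hexp : -‖σ⁻¹ • (x - t • X i)‖ ^ 2 / 2
        = -‖x‖ ^ 2 / (2 * σ ^ 2) + (-(t ^ 2 * ‖X i‖ ^ 2) / (2 * σ ^ 2) + c * ⟪X i, x⟫) := by
      rw [hnorm, hns, hcdef]
      field_simp
      ring
    rw [hexp, Real.exp_add, Real.exp_add]
    ring
  -- rewrite the empirical vector field
  have hvn : ∀ x, vnEmp gaussK σmin X t x
      = σ⁻¹ • ((∑ j, q j x)⁻¹ • ∑ i, (q i x) • X i) - (σ⁻¹ * (1 - σmin)) • x := by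
    intro x
    have hSq : 0 < ∑ j, q j x :=
      Finset.sum_pos (fun j _ => hqpos j x) (Finset.univ_nonempty_iff.2 ⟨⟨0, hn0⟩⟩)
    have hP : (∑ j, pcond gaussK σmin t x (X j)) = C x * ∑ j, q j x := by
      rw [Finset.mul_sum]
      exact Finset.sum_congr rfl fun j _ => hsplit x j
    have hterm : ∀ i, pcond gaussK σmin t x (X i) • (σ⁻¹ • (X i - (1 - σmin) • x))
        = σ⁻¹ • ((C x * q i x) • X i)
          - (σ⁻¹ * (C x * q i x)) • ((1 - σmin) • x) := by
      intro i
      rw [hsplit x i]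
      module
    have hstep1 : (∑ i, pcond gaussK σmin t x (X i) • (σ⁻¹ • (X i - (1 - σmin) • x)))
        = σ⁻¹ • ((C x) • ∑ i, (q i x) • X i)
          - (σ⁻¹ * (C x * ∑ j, q j x)) • ((1 - σmin) • x) := by
      rw [Finset.sum_congr rfl fun i _ => hterm i, Finset.sum_sub_distrib]
      congr 1
      · rw [Finset.smul_sum, Finset.smul_sum]
        exact Finset.sum_congr rfl fun i _ => by rw [mul_smul]
      · rw [← Finset.sum_smul]
        congr 1
        rw [Finset.mul_sum, Finset.mul_sum]
    have hvc : ∀ i, vcond σmin t x (X i) = σ⁻¹ • (X i - (1 - σmin) • x) := by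
      intro i
      rw [vcond, hσdef]
    have hCne : C x ≠ 0 := (hCpos x).ne'
    have hSne : (∑ j, q j x) ≠ 0 := hSq.ne'
    have hM1 : (C x * ∑ j, q j x)⁻¹ • (σ⁻¹ • ((C x) • ∑ i, (q i x) • X i))
        = σ⁻¹ • ((∑ j, q j x)⁻¹ • ∑ i, (q i x) • X i) := by
      rw [smul_smul, smul_smul, smul_smul]
      congr 1
      calc (C x * ∑ j, q j x)⁻¹ * σ⁻¹ * C x
          = ((C x)⁻¹ * C x) * ((∑ j, q j x)⁻¹ * σ⁻¹) := by rw [mul_inv]; ring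
        _ = σ⁻¹ * (∑ j, q j x)⁻¹ := by rw [inv_mul_cancel₀ hCne]; ring
    have hM2 : (C x * ∑ j, q j x)⁻¹ • ((σ⁻¹ * (C x * ∑ j, q j x)) • ((1 - σmin) • x))
        = (σ⁻¹ * (1 - σmin)) • x := by
      rw [smul_smul, smul_smul]
      congr 1
      calc (C x * ∑ j, q j x)⁻¹ * (σ⁻¹ * (C x * ∑ j, q j x)) * (1 - σmin)
          = ((C x * ∑ j, q j x)⁻¹ * (C x * ∑ j, q j x)) * (σ⁻¹ * (1 - σmin)) := by ring
        _ = σ⁻¹ * (1 - σmin) := by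
            rw [inv_mul_cancel₀ (mul_ne_zero hCne hSne), one_mul]
    rw [vnEmp]
    simp only [hvc]
    rw [hstep1, hP, smul_sub, hM1, hM2]
  -- Lipschitz constant for the softmax mean
  have hm : LipschitzWith (Real.toNNReal (c * d))
      (fun x => (∑ j, q j x)⁻¹ • ∑ i, (q i x) • X i) :=
    smean_lipschitz hn0 a ha c hc0 X (d : ℝ) hXd
  -- conclude
  have hKnonneg : 0 ≤ 1 / σ + 2 * d / σ ^ 3 := by positivity
  apply LipschitzWith.of_dist_le_mul
  intro x y
  rw [Real.coe_toNNReal _ hKnonneg]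
  have hdist : dist (vnEmp gaussK σmin X t x) (vnEmp gaussK σmin X t y)
      ≤ σ⁻¹ * (dist ((∑ j, q j x)⁻¹ • ∑ i, (q i x) • X i)
          ((∑ j, q j y)⁻¹ • ∑ i, (q i y) • X i))
        + (σ⁻¹ * (1 - σmin)) * dist x y := by
    rw [hvn x, hvn y, dist_eq_norm, dist_eq_norm, dist_eq_norm]
    have : σ⁻¹ • ((∑ j, q j x)⁻¹ • ∑ i, (q i x) • X i) - (σ⁻¹ * (1 - σmin)) • x
        - (σ⁻¹ • ((∑ j, q j y)⁻¹ • ∑ i, (q i y) • X i) - (σ⁻¹ * (1 - σmin)) • y)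
        = σ⁻¹ • (((∑ j, q j x)⁻¹ • ∑ i, (q i x) • X i)
            - ((∑ j, q j y)⁻¹ • ∑ i, (q i y) • X i))
          - (σ⁻¹ * (1 - σmin)) • (x - y) := by
      rw [smul_sub, smul_sub]
      abel
    rw [this]
    refine (norm_sub_le _ _).trans ?_
    rw [norm_smul, norm_smul, Real.norm_eq_abs, Real.norm_eq_abs,
      abs_of_nonneg (by positivity : (0:ℝ) ≤ σ⁻¹),
      abs_of_nonneg (by positivity : (0:ℝ) ≤ σ⁻¹ * (1 - σmin))]
  have hmd : dist ((∑ j, q j x)⁻¹ • ∑ i, (q i x) • X i)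
      ((∑ j, q j y)⁻¹ • ∑ i, (q i y) • X i) ≤ (c * d) * dist x y := by
    have := hm.dist_le_mul x y
    rwa [Real.coe_toNNReal _ (by positivity : (0:ℝ) ≤ c * d)] at this
  have hd0 : (0:ℝ) ≤ dist x y := dist_nonneg
  calc dist (vnEmp gaussK σmin X t x) (vnEmp gaussK σmin X t y)
      ≤ σ⁻¹ * ((c * d) * dist x y) + (σ⁻¹ * (1 - σmin)) * dist x y := by
        refine hdist.trans ?_
        exact add_le_add_left (mul_le_mul_of_nonneg_left hmd (by positivity)) _
    _ = (σ⁻¹ * (c * d) + σ⁻¹ * (1 - σmin)) * dist x y := by ring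
    _ ≤ (1 / σ + 2 * d / σ ^ 3) * dist x y := by
        apply mul_le_mul_of_nonneg_right _ hd0
        have hterm1 : σ⁻¹ * (c * d) ≤ 2 * d / σ ^ 3 := by
          rw [hcdef]
          have hd0' : (0:ℝ) ≤ d := Nat.cast_nonneg d
          have h2 : σ⁻¹ * (t / σ ^ 2 * d) = t * d / σ ^ 3 := by
            field_simp
          rw [h2]
          have h3 : t * d ≤ 2 * d := by nlinarith
          exact (div_le_div_iff_of_pos_right (by positivity)).2 h3
        have hterm2 : σ⁻¹ * (1 - σmin) ≤ 1 / σ := by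
          rw [one_div]
          have : 1 - σmin ≤ 1 := by linarith
          calc σ⁻¹ * (1 - σmin) ≤ σ⁻¹ * 1 := by
                apply mul_le_mul_of_nonneg_left this (by positivity)
            _ = σ⁻¹ := mul_one _
        linarith

end
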